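/- With notation as for the quiver $Q_n$ and its vertex-wise tensor product of modules, the $p$-fold tensor power of the path algebra $A = kQ_n$ (as a right module over itself, $A = e_1 A \oplus e_2 A$) decomposes as $A^{\otimes p} \cong e_1 A \oplus (e_2 A)^{(n+1)^p - n}$ for all $p \geq 1$. -/

import Mathlib

open scoped TensorProduct
/-- A representation of the quiver `Qₙ` (two vertices `e₁, e₂` and `n` arrows
`x₁, …, xₙ` from `e₂` to `e₁`), equivalently a right module over the path algebra
`kQₙ`: a pair of vector spaces `(M₁, M₂) = (M_{e₁}, M_{e₂})` together with `n` linear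
maps `M₁ → M₂` (the right actions of the arrows). -/
structure QRep (k : Type) [Field k] (n : ℕ) where
  M1 : Type
  M2 : Type
  acg1 : AddCommGroup M1
  acg2 : AddCommGroup M2
  mod1 : Module k M1
  mod2 : Module k M2
  f : Fin n → M1 →ₗ[k] M2

attribute [instance] QRep.acg1 QRep.acg2 QRep.mod1 QRep.mod2

variable {k : Type} [Field k] {n : ℕ}

/-- The vertex-wise tensor product of two representations of `Qₙ`:
`(M ⊗ N)_v = M_v ⊗ N_v` and `f_x^{M⊗N} = f_x^M ⊗ f_x^N`. -/
noncomputable def QRep.tensor (A B : QRep k n) : QRep k n where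
  M1 := A.M1 ⊗[k] B.M1
  M2 := A.M2 ⊗[k] B.M2
  acg1 := inferInstance
  acg2 := inferInstance
  mod1 := inferInstance
  mod2 := inferInstance
  f i := TensorProduct.map (A.f i) (B.f i)

/-- The direct sum of two representations of `Qₙ`. -/
def QRep.dsum (A B : QRep k n) : QRep k n where
  M1 := A.M1 × B.M1
  M2 := A.M2 × B.M2
  acg1 := inferInstance
  acg2 := inferInstance
  mod1 := inferInstance
  mod2 := inferInstance
  f i := (A.f i).prodMap (B.f i)

/-- The indecomposable projective `e₁A`: `(e₁A)_{e₁} = k`, `(e₁A)_{e₂} = kⁿ`, with the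
arrow `xᵢ` acting by the `i`-th coordinate inclusion `k → kⁿ`. -/
def e1A (k : Type) [Field k] (n : ℕ) : QRep k n where
  M1 := k
  M2 := Fin n → k
  acg1 := inferInstance
  acg2 := inferInstance
  mod1 := inferInstance
  mod2 := inferInstance
  f i := LinearMap.single k (fun _ : Fin n => k) i

/-- The direct sum of `m` copies of the indecomposable projective `e₂A`
(`(e₂A)_{e₁} = 0`, `(e₂A)_{e₂} = k`, arrows acting by `0`); so `e2pow k n 1 = e₂A`. -/
def e2pow (k : Type) [Field k] (n m : ℕ) : QRep k n where
  M1 := Fin 0 → k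
  M2 := Fin m → k
  acg1 := inferInstance
  acg2 := inferInstance
  mod1 := inferInstance
  mod2 := inferInstance
  f _ := 0

/-- An isomorphism of representations of `Qₙ`: a pair of linear isomorphisms at the two
vertices commuting with the action of every arrow. -/
structure QRepIso (A B : QRep k n) where
  e1 : A.M1 ≃ₗ[k] B.M1
  e2 : A.M2 ≃ₗ[k] B.M2
  comm : ∀ i : Fin n, (e2 : A.M2 →ₗ[k] B.M2).comp (A.f i) = (B.f i).comp (e1 : A.M1 →ₗ[k] B.M1)


/-- The path algebra `A = kQₙ` as a right module over itself: `A = e₁A ⊕ e₂A`. -/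
noncomputable def Arep (k : Type) [Field k] (n : ℕ) : QRep k n :=
  (e1A k n).dsum (e2pow k n 1)

/-- `tpow k n p` is the `(p+1)`-fold vertex-wise tensor power `A^{⊗(p+1)}` of the path
algebra `A = kQₙ` as a right module over itself. -/
noncomputable def tpow (k : Type) [Field k] (n : ℕ) : ℕ → QRep k n
  | 0 => Arep k n
  | p + 1 => (tpow k n p).tensor (Arep k n)


section Aux

open Module


/-- dual family for a linearly independent family over a field -/
lemma dual_family {V : Type} [AddCommGroup V] [Module k V] {s : ℕ} {v : Fin s → V}
    (hv : LinearIndependent k v) :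
    ∃ f : V →ₗ[k] (Fin s → k), ∀ i, f (v i) = Pi.single i 1 := by
  obtain ⟨W', hW'⟩ := Submodule.exists_isCompl (Submodule.span k (Set.range v))
  let P := Submodule.projectionOnto _ _ hW'
  let b : Basis (Fin s) k _ := Basis.span hv
  refine ⟨(b.equivFun : _ →ₗ[k] _) ∘ₗ P, fun i => ?_⟩
  have h1 : P (v i) = b i := by
    have : v i ∈ Submodule.span k (Set.range v) := Submodule.subset_span ⟨i, rfl⟩
    have h2 := Submodule.linearProjOfIsCompl_apply_left hW' ⟨v i, this⟩
    have h3 : (b i : V) = v i := congrArg Subtype.val (Basis.span_apply hv i)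
    apply Subtype.ext
    rw [show P (v i) = P ((⟨v i, this⟩ : Submodule.span k (Set.range v)) : V) from rfl]
    exact (congrArg Subtype.val h2).trans h3.symm
  rw [LinearMap.comp_apply, h1]
  ext j
  simp [Basis.equivFun_self, Pi.single_apply, eq_comm]

open scoped TensorProduct in
lemma tmul_indep {M N : Type} [AddCommGroup M] [Module k M] [AddCommGroup N] [Module k N]
    {s : ℕ} {a : Fin s → M} {b : Fin s → N}
    (ha : LinearIndependent k a) (hb : LinearIndependent k b) :
    LinearIndependent k (fun i => a i ⊗ₜ[k] b i) := by
  obtain ⟨f, hf⟩ := dual_family ha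
  obtain ⟨g, hg⟩ := dual_family hb
  let Φ : M ⊗[k] N →ₗ[k] (Fin s → k) :=
    LinearMap.pi (fun j => (TensorProduct.lid k k).toLinearMap ∘ₗ
      TensorProduct.map ((LinearMap.proj j) ∘ₗ f) ((LinearMap.proj j) ∘ₗ g))
  apply LinearIndependent.of_comp Φ
  have hcomp : (Φ ∘ fun i => a i ⊗ₜ[k] b i) = fun i => Pi.single i (1:k) := by
    funext i
    ext j
    simp only [Function.comp_apply, Φ, LinearMap.pi_apply, LinearMap.comp_apply,
      TensorProduct.map_tmul, LinearEquiv.coe_toLinearMap, TensorProduct.lid_tmul,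
      LinearMap.proj_apply, hf, hg]
    simp only [Pi.single_apply]
    split_ifs <;> simp
  rw [hcomp]
  have hb2 : ⇑(Pi.basisFun k (Fin s)) = fun i => Pi.single i (1:k) :=
    funext fun i => by simp [Pi.basisFun_apply]
  have := (Pi.basisFun k (Fin s)).linearIndependent
  rwa [hb2] at this


open Module in
lemma build_iso (R : QRep k n) (m : ℕ) [FiniteDimensional k R.M1] [FiniteDimensional k R.M2]
    (u : R.M1) (hu : u ≠ 0) (h1 : finrank k R.M1 = 1) (h2 : finrank k R.M2 = n + m)
    (hv : LinearIndependent k (fun i => R.f i u)) :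
    Nonempty (QRepIso R ((e1A k n).dsum (e2pow k n m))) := by
  classical
  -- vertex 1 equivalence
  let b1 : Basis (Fin 1) k R.M1 := FiniteDimensional.basisSingleton (Fin 1) h1 u hu
  let q : k ≃ₗ[k] k × (Fin 0 → k) :=
    LinearEquiv.ofLinear (LinearMap.inl k k (Fin 0 → k)) (LinearMap.fst k k (Fin 0 → k))
      (by apply LinearMap.ext; intro x; exact Prod.ext rfl (Subsingleton.elim _ _))
      (by apply LinearMap.ext; intro x; rfl)
  let e1 : R.M1 ≃ₗ[k] k × (Fin 0 → k) :=
    b1.equivFun ≪≫ₗ (LinearEquiv.funUnique (Fin 1) k k) ≪≫ₗ q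
  have he1u : e1 u = ((1 : k), 0) := by
    have hb : b1 default = u := FiniteDimensional.basisSingleton_apply _ h1 u hu _
    have hrepr : b1.equivFun u = Pi.single (default : Fin 1) (1:k) := by
      rw [← hb]
      ext j
      rw [b1.equivFun_self]
      simp [Pi.single_apply, eq_comm]
    simp only [e1, LinearEquiv.trans_apply, hrepr]
    rfl
  -- vertex 2 equivalence
  set v : Fin n → R.M2 := fun i => R.f i u with hvdef
  let W : Submodule k R.M2 := Submodule.span k (Set.range v)
  obtain ⟨W', hW'⟩ := Submodule.exists_isCompl W
  let bW : Basis (Fin n) k W := Basis.span hv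
  have hfW : finrank k W = n := by
    rw [finrank_span_eq_card hv, Fintype.card_fin]
  have hfW' : finrank k W' = m := by
    have := Submodule.finrank_add_eq_of_isCompl hW'
    rw [hfW, h2] at this
    omega
  let eW' : W' ≃ₗ[k] (Fin m → k) :=
    LinearEquiv.ofFinrankEq _ _ (by rw [hfW', Module.finrank_fin_fun])
  let e2 : R.M2 ≃ₗ[k] (Fin n → k) × (Fin m → k) :=
    (Submodule.prodEquivOfIsCompl W W' hW').symm ≪≫ₗ LinearEquiv.prodCongr bW.equivFun eW'
  have he2v : ∀ i, e2 (R.f i u) = (Pi.single i (1:k), 0) := by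
    intro i
    have hbWi : (bW i : R.M2) = v i := congrArg Subtype.val (Basis.span_apply hv i)
    have h3 : (Submodule.prodEquivOfIsCompl W W' hW').symm (v i) = (bW i, (0 : W')) := by
      rw [LinearEquiv.symm_apply_eq]
      simp [Submodule.coe_prodEquivOfIsCompl', hbWi]
    have hfu : R.f i u = v i := rfl
    rw [hfu]
    simp only [e2, LinearEquiv.trans_apply, h3, LinearEquiv.prodCongr_apply]
    refine Prod.ext ?_ (by simp)
    show bW.equivFun (bW i) = Pi.single i 1
    ext j
    rw [bW.equivFun_self]
    simp [Pi.single_apply, eq_comm]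
  refine ⟨⟨e1, e2, fun i => ?_⟩⟩
  apply b1.ext
  intro j
  have hj : b1 j = u := by
    have : j = default := Subsingleton.elim _ _
    rw [this]; exact FiniteDimensional.basisSingleton_apply _ h1 u hu _
  show e2 (R.f i (b1 j)) = ((e1A k n).dsum (e2pow k n m)).f i (e1 (b1 j))
  rw [hj, he1u, he2v i]
  show (Pi.single i (1:k), (0 : Fin m → k)) =
    ((LinearMap.single k (fun _ : Fin n => k) i).prodMap (0 : (Fin 0 → k) →ₗ[k] (Fin m → k))) ((1:k), 0)
  refine Prod.ext ?_ (by simp)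
  show Pi.single i (1:k) = LinearMap.single k (fun _ : Fin n => k) i 1
  simp

open Module in
lemma pi_single_indep (k : Type) [Field k] (s : ℕ) :
    LinearIndependent k (fun i : Fin s => (Pi.single i (1:k) : Fin s → k)) := by
  have hb2 : ⇑(Pi.basisFun k (Fin s)) = fun i => Pi.single i (1:k) :=
    funext fun i => by simp [Pi.basisFun_apply]
  have := (Pi.basisFun k (Fin s)).linearIndependent
  rwa [hb2] at this

open Module in
lemma good_base (k : Type) [Field k] (n : ℕ) :
    ∃ _ : FiniteDimensional k (Arep k n).M1, ∃ _ : FiniteDimensional k (Arep k n).M2,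
      finrank k (Arep k n).M1 = 1 ∧ finrank k (Arep k n).M2 = n + 1 ∧
      ∃ w : (Arep k n).M1, w ≠ 0 ∧
        LinearIndependent k (fun i : Fin n => (Arep k n).f i w) := by
  have i1 : FiniteDimensional k (k × (Fin 0 → k)) := inferInstance
  have i2 : FiniteDimensional k ((Fin n → k) × (Fin 1 → k)) := inferInstance
  refine ⟨i1, i2, ?_, ?_, ((1:k), 0), ?_, ?_⟩
  · show finrank k (k × (Fin 0 → k)) = 1
    simp [Module.finrank_fin_fun]
  · show finrank k ((Fin n → k) × (Fin 1 → k)) = n + 1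
    simp [Module.finrank_fin_fun]
  · intro h
    have h' : ((1:k), (0 : Fin 0 → k)) = (0 : k × (Fin 0 → k)) := h
    exact one_ne_zero (congrArg Prod.fst h')
  · have hfam : (fun i : Fin n => (Arep k n).f i ((1:k), 0)) =
        fun i : Fin n => ((Pi.single i (1:k) : Fin n → k), (0 : Fin 1 → k)) := by
      funext i
      show ((LinearMap.single k (fun _ : Fin n => k) i).prodMap 0) ((1:k), 0) = _
      refine Prod.ext ?_ (by simp; rfl)
      show LinearMap.single k (fun _ : Fin n => k) i 1 = Pi.single i (1:k)
      simp
    rw [hfam]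
    apply LinearIndependent.of_comp (LinearMap.fst k (Fin n → k) (Fin 1 → k))
    have : ((LinearMap.fst k (Fin n → k) (Fin 1 → k)) ∘
        fun i : Fin n => ((Pi.single i (1:k) : Fin n → k), (0 : Fin 1 → k))) =
        fun i : Fin n => (Pi.single i (1:k) : Fin n → k) := rfl
    rw [this]
    exact pi_single_indep k n

open Module in
lemma good_tpow (k : Type) [Field k] (n : ℕ) (p : ℕ) :
    ∃ _ : FiniteDimensional k (tpow k n p).M1, ∃ _ : FiniteDimensional k (tpow k n p).M2,
      finrank k (tpow k n p).M1 = 1 ∧ finrank k (tpow k n p).M2 = (n+1)^(p+1) ∧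
      ∃ u : (tpow k n p).M1, u ≠ 0 ∧
        LinearIndependent k (fun i : Fin n => (tpow k n p).f i u) := by
  induction p with
  | zero =>
    obtain ⟨j1, j2, g1, g2, w, hw, gind⟩ := good_base k n
    exact ⟨j1, j2, g1, by rw [pow_one]; exact g2, w, hw, gind⟩
  | succ p ih =>
    obtain ⟨i1, i2, h1, h2, u, hu, hind⟩ := ih
    obtain ⟨j1, j2, g1, g2, w, hw, gind⟩ := good_base k n
    haveI := i1; haveI := i2; haveI := j1; haveI := j2
    haveI : FiniteDimensional k ((tpow k n p).M1 ⊗[k] (Arep k n).M1) := inferInstance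
    haveI : FiniteDimensional k ((tpow k n p).M2 ⊗[k] (Arep k n).M2) := inferInstance
    refine ⟨‹_›, ‹_›, ?_, ?_, u ⊗ₜ[k] w, ?_, ?_⟩
    · show finrank k ((tpow k n p).M1 ⊗[k] (Arep k n).M1) = 1
      rw [Module.finrank_tensorProduct, h1, g1]
    · show finrank k ((tpow k n p).M2 ⊗[k] (Arep k n).M2) = (n+1)^(p+1+1)
      rw [Module.finrank_tensorProduct, h2, g2]
      ring
    · have hsing : LinearIndependent k (fun _ : Fin 1 => u ⊗ₜ[k] w) :=
        tmul_indep (linearIndependent_unique_iff.mpr hu) (linearIndependent_unique_iff.mpr hw)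
      exact hsing.ne_zero 0
    · have heq : (fun i : Fin n => (tpow k n (p+1)).f i (u ⊗ₜ[k] w)) =
          fun i : Fin n => ((tpow k n p).f i u) ⊗ₜ[k] ((Arep k n).f i w) := by
        funext i
        exact TensorProduct.map_tmul _ _ _ _
      rw [heq]
      exact tmul_indep hind gind

end Aux

/- STATEMENT 4: for every `p ≥ 1`, the `p`-fold vertex-wise tensor power of the path
algebra `A = kQₙ = e₁A ⊕ e₂A` (as a right module over itself) decomposes as
`A^{⊗p} ≅ e₁A ⊕ (e₂A)^{(n+1)^p - n}`. -/
theorem stmt_4 (k : Type) [Field k] (n : ℕ) (p : ℕ) (hp : 1 ≤ p) :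
    Nonempty (QRepIso (tpow k n (p - 1))
      ((e1A k n).dsum (e2pow k n ((n + 1) ^ p - n)))) := by
  obtain ⟨q, rfl⟩ : ∃ q, p = q + 1 := ⟨p - 1, by omega⟩
  simp only [Nat.add_sub_cancel]
  obtain ⟨i1, i2, h1, h2, u, hu, hind⟩ := good_tpow k n q
  have hge : n + 1 ≤ (n + 1) ^ (q + 1) := Nat.le_self_pow (by omega) _
  exact build_iso _ _ u hu h1 (h2.trans (by omega)) hind
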